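/- Let H ⊆ G be finite groups and let X = G/H with the left translation action of G. Then (G,H) is a Gelfand pair if and only if Σ_{g,h ∈ G} #X^{[g,h]} = Σ_{g,h ∈ G} #X^g · #X^h · #X^{gh}. -/

import Mathlib

open CategoryTheory Module
open scoped commutatorElement

/-- The permutation representation of `G` on complex-valued functions on a `G`-set `X`. -/
noncomputable def permRep (G X : Type) [Group G] [MulAction G X] :
    Representation ℂ G (X → ℂ) where
  toFun g :=
    { toFun := fun f x => f (g⁻¹ • x)
      map_add' := fun _ _ => rfl
      map_smul' := fun _ _ => rfl }
  map_one' := by ext f x; simp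
  map_mul' := by intro g h; ext f x; simp [mul_smul]

/-- The permutation representation `ℂ[X]` as a finite-dimensional representation. -/
noncomputable def permFDRep (G X : Type) [Group G] [MulAction G X] [Fintype X] :
    FDRep ℂ G :=
  FDRep.of (permRep G X)

set_option maxHeartbeats 1000000

namespace GelfandAux

open Representation FDRep

open scoped Classical

section CharPerm
variable {G : Type} [Group G]
theorem char_perm (X : Type) [Fintype X] [MulAction G X] (g : G) :
    (permFDRep G X).character g = (Nat.card {x : X // g • x = x} : ℂ) := by
  have : (permFDRep G X).character g = LinearMap.trace ℂ (X → ℂ) ((permRep G X) g) := rfl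
  rw [this, LinearMap.trace_eq_matrix_trace ℂ (Pi.basisFun ℂ X), Matrix.trace]
  have hM : ∀ x : X, (LinearMap.toMatrix (Pi.basisFun ℂ X) (Pi.basisFun ℂ X) ((permRep G X) g)) x x
      = if g • x = x then 1 else 0 := by
    intro x
    rw [LinearMap.toMatrix_apply]
    simp only [Pi.basisFun_apply, Pi.basisFun_repr]
    have h0 : ((permRep G X) g) (Pi.single x (1:ℂ)) x = (Pi.single x (1:ℂ) : X → ℂ) (g⁻¹ • x) := rfl
    rw [h0, Pi.single_apply]
    congr 1
    simp only [eq_iff_iff]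
    rw [inv_smul_eq_iff, eq_comm]
  simp only [Matrix.diag_apply, hM]
  rw [Finset.sum_boole, Nat.card_eq_fintype_card, Fintype.card_subtype]

end CharPerm

section Main
variable {G : Type} [Group G] [Fintype G]

noncomputable instance : Invertible ((Fintype.card G : ℂ)) :=
  invertibleOfNonzero (by exact_mod_cast Fintype.card_ne_zero)
noncomputable instance : Invertible ((Nat.card G : ℂ)) :=
  invertibleOfNonzero (by exact_mod_cast Nat.card_pos.ne')

theorem proj_formula (V W : FDRep ℂ G) :
    (finrank ℂ (V ⟶ W) : ℂ) = ⅟ (Fintype.card G : ℂ) • ∑ g : G, V.character g⁻¹ * W.character g := by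
  rw [← scalar_product_char_eq_finrank_equivariant, invOf_eq_inv, smul_eq_mul,
    Fintype.card_eq_nat_card]
  congr 1
  exact Finset.sum_congr rfl fun g _ => mul_comm _ _

variable {V : Type} [AddCommGroup V] [Module ℂ V]

def IsStable (ρ : Representation ℂ G V) (p : Submodule ℂ V) : Prop :=
  ∀ (g : G), ∀ x ∈ p, ρ g x ∈ p

noncomputable def subRep (ρ : Representation ℂ G V) (p : Submodule ℂ V)
    (hp : IsStable ρ p) : Representation ℂ G p where
  toFun g := (ρ g).restrict (fun x hx => hp g x hx)
  map_one' := by ext x; simp [LinearMap.restrict_apply]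
  map_mul' g h := by ext x; simp [LinearMap.restrict_apply]

@[simp] theorem subRep_apply (ρ : Representation ℂ G V) (p : Submodule ℂ V)
    (hp : IsStable ρ p) (g : G) (x : p) : (subRep ρ p hp g x : V) = ρ g x := rfl

/-- The inclusion of a stable submodule as a morphism in `FDRep`. -/
noncomputable def inclHom (W : FDRep ℂ G) (p : Submodule ℂ W) (hp : IsStable W.ρ p)
    [FiniteDimensional ℂ ↥p] :
    FDRep.of (subRep W.ρ p hp) ⟶ W where
  hom := FGModuleCat.ofHom p.subtype
  comm g := by
    ext x
    rfl

theorem fdRep_hom_comm_apply {A B : FDRep ℂ G} (f : A ⟶ B) (g : G) (x : A) :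
    f.hom (A.ρ g x) = B.ρ g (f.hom x) :=
  LinearMap.congr_fun (congrArg (fun φ => φ.hom.hom) (f.comm g)) x

theorem simple_of_minimal (W : FDRep ℂ G) (p : Submodule ℂ W) (hp : IsStable W.ρ p)
    (hne : p ≠ ⊥)
    (hmin : ∀ r : Submodule ℂ W, IsStable W.ρ r → r ≠ ⊥ → r ≤ p → r = p) :
    Simple (FDRep.of (subRep W.ρ p hp)) := by
  constructor
  intro Y f hmono
  constructor
  · intro hiso hf0
    -- if f is iso and zero then identity of target is zero, contradiction with p ≠ ⊥
    obtain ⟨x, hx⟩ := Submodule.exists_mem_ne_zero_of_ne_bot hne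
    rw [hf0] at hiso
    have h1 : (inv (0 : Y ⟶ FDRep.of (subRep W.ρ p hp)) ≫ (0 : Y ⟶ FDRep.of (subRep W.ρ p hp)))
        = 𝟙 _ := IsIso.inv_hom_id _
    rw [Limits.comp_zero] at h1
    have h2 := congrArg Action.Hom.hom h1
    rw [Action.zero_hom, Action.id_hom] at h2
    have h3 := LinearMap.congr_fun (congrArg (fun φ => φ.hom.hom) h2)
      (⟨x, hx.1⟩ : p)
    apply hx.2
    have : ((0 : ↥p) : ↥W) = x := congrArg Subtype.val h3
    simpa using this.symm
  · intro hf0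
    set φ : ↥Y →ₗ[ℂ] ↥p := (f.hom.hom.hom : ↥Y →ₗ[ℂ] ↥p)
    -- injectivity from mono
    have hker : LinearMap.ker φ = ⊥ := by
      by_contra hK
      set K := LinearMap.ker φ
      have hKst : IsStable Y.ρ K := by
        intro g x hx
        have hc' : φ ((Y.ρ g) x) = (subRep W.ρ p hp g) (φ x) := fdRep_hom_comm_apply f g x
        have hx' : φ x = 0 := hx
        refine LinearMap.mem_ker.mpr ?_
        rw [hc', hx', map_zero]
      set u : FDRep.of (subRep Y.ρ K hKst) ⟶ Y := inclHom Y K hKst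
      have hu : u ≫ f = (0 : FDRep.of (subRep Y.ρ K hKst) ⟶ FDRep.of (subRep W.ρ p hp)) := by
        apply Action.hom_ext
        ext x
        exact congrArg Subtype.val x.2
      have : u = 0 := by
        have := hu.trans (Limits.zero_comp (f := f)).symm
        exact (cancel_mono f).mp this
      obtain ⟨x, hx⟩ := Submodule.exists_mem_ne_zero_of_ne_bot hK
      apply hx.2
      have h5 : u.hom (⟨x, hx.1⟩ : K) = (0 : ↥Y) := by rw [this]; rfl
      exact h5
    -- surjectivity
    have hranne : LinearMap.range (p.subtype ∘ₗ φ) ≠ ⊥ := by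
      intro hr
      apply hf0
      apply Action.hom_ext
      apply FGModuleCat.hom_ext
      apply LinearMap.ext
      intro y
      have : p.subtype (φ y) = 0 := by
        have : p.subtype (φ y) ∈ LinearMap.range (p.subtype ∘ₗ φ) := ⟨y, rfl⟩
        rw [hr] at this
        simpa using this
      exact Subtype.ext (by simpa using this)
    have hranst : IsStable W.ρ (LinearMap.range (p.subtype ∘ₗ φ)) := by
      rintro g x ⟨y, rfl⟩
      refine ⟨Y.ρ g y, ?_⟩
      simp only [LinearMap.comp_apply]
      have hc' : φ ((Y.ρ g) y) = (subRep W.ρ p hp g) (φ y) := fdRep_hom_comm_apply f g y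
      rw [hc']
      rfl
    have hranle : LinearMap.range (p.subtype ∘ₗ φ) ≤ p := by
      rintro x ⟨y, rfl⟩
      exact (φ y).2
    have hran : LinearMap.range (p.subtype ∘ₗ φ) = p := hmin _ hranst hranne hranle
    have hsurj : Function.Surjective φ := by
      intro z
      have : (z : ↥W) ∈ LinearMap.range (p.subtype ∘ₗ φ) := by rw [hran]; exact z.2
      obtain ⟨y, hy⟩ := this
      exact ⟨y, Subtype.ext hy⟩
    have hinj : Function.Injective φ := LinearMap.ker_eq_bot.mp hker
    have hbij : Function.Bijective φ := ⟨hinj, hsurj⟩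
    have : IsIso f.hom := by
      set e := LinearEquiv.ofBijective φ hbij
      refine ⟨(FGModuleCat.ofHom e.symm.toLinearMap : (FDRep.of (subRep W.ρ p hp)).V ⟶ Y.V), ?_, ?_⟩
      · apply FGModuleCat.hom_ext; apply LinearMap.ext; intro y; exact e.symm_apply_apply y
      · apply FGModuleCat.hom_ext; apply LinearMap.ext; intro z; exact e.apply_symm_apply z
    infer_instance

/-- Maschke: a stable submodule has a stable complement. -/
theorem exists_stable_compl (ρ : Representation ℂ G V) [FiniteDimensional ℂ V]
    (p : Submodule ℂ V) (hp : IsStable ρ p) :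
    ∃ q : Submodule ℂ V, IsStable ρ q ∧ IsCompl p q := by
  obtain ⟨c, hc⟩ := Submodule.exists_isCompl p
  set e : V →ₗ[ℂ] V := p.subtype ∘ₗ (p.linearProjOfIsCompl c hc)
  have he : ∀ x ∈ p, e x = x := fun x hx => by
    simp [e, Submodule.linearProjOfIsCompl_apply_left hc ⟨x, hx⟩]
    exact congrArg Subtype.val (Submodule.projectionOnto_apply_left hc ⟨x, hx⟩)
  have her : ∀ x, e x ∈ p := fun x => (p.linearProjOfIsCompl c hc x).2
  set n : ℂ := (Fintype.card G : ℂ)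
  have hn : n ≠ 0 := Nat.cast_ne_zero.mpr Fintype.card_ne_zero
  set π : V →ₗ[ℂ] V := n⁻¹ • ∑ g : G, (ρ g) ∘ₗ e ∘ₗ (ρ g⁻¹)
  have hπmem : ∀ x, π x ∈ p := by
    intro x
    simp only [π, LinearMap.smul_apply, LinearMap.sum_apply, LinearMap.comp_apply]
    exact Submodule.smul_mem _ _ (Submodule.sum_mem _ fun g _ => hp g _ (her _))
  have hπid : ∀ x ∈ p, π x = x := by
    intro x hx
    have : ∀ g : G, (ρ g) (e ((ρ g⁻¹) x)) = x := by
      intro g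
      rw [he _ (hp g⁻¹ x hx)]
      have := LinearMap.congr_fun (ρ.map_mul g g⁻¹) x
      simp only [mul_inv_cancel, map_one, Module.End.one_apply, Module.End.mul_apply] at this
      exact this.symm
    simp only [π, LinearMap.smul_apply, LinearMap.sum_apply, LinearMap.comp_apply, this]
    rw [Finset.sum_const, Finset.card_univ, ← Nat.cast_smul_eq_nsmul ℂ, smul_smul,
      inv_mul_cancel₀ hn, one_smul]
  have hπcomm : ∀ h : G, π ∘ₗ (ρ h) = (ρ h) ∘ₗ π := by
    intro h
    ext x
    simp only [π, LinearMap.comp_apply, LinearMap.smul_apply, LinearMap.sum_apply,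
      LinearMap.map_smul]
    congr 1
    rw [map_sum]
    rw [← Equiv.sum_comp (Equiv.mulLeft h) (fun g => (ρ g) (e ((ρ g⁻¹) ((ρ h) x))))]
    refine Finset.sum_congr rfl fun g _ => ?_
    simp only [Equiv.coe_mulLeft]
    have h1 : (ρ (h * g)) = (ρ h) * (ρ g) := ρ.map_mul h g
    have h2 : (ρ ((h * g)⁻¹)) ∘ₗ (ρ h) = ρ g⁻¹ := by
      ext y
      have := LinearMap.congr_fun (ρ.map_mul (h * g)⁻¹ h) y
      simp only [Module.End.mul_apply] at this
      simp only [LinearMap.comp_apply, ← this]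
      congr 1
      group
    rw [h1]
    have := LinearMap.congr_fun h2 x
    simp only [LinearMap.comp_apply] at this
    rw [this]
    rfl
  refine ⟨LinearMap.ker π, ?_, ?_⟩
  · intro g x hx
    have := LinearMap.congr_fun (hπcomm g) x
    simp only [LinearMap.comp_apply] at this
    simp only [LinearMap.mem_ker] at hx ⊢
    rw [this, hx, map_zero]
  · constructor
    · rw [disjoint_iff]
      ext x
      simp only [Submodule.mem_inf, Submodule.mem_bot, LinearMap.mem_ker]
      constructor
      · rintro ⟨h1, h2⟩; rw [← hπid x h1, h2]
      · rintro rfl; simp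
    · rw [codisjoint_iff, eq_top_iff]
      intro x _
      have h1 : π x ∈ p := hπmem x
      have h2 : x - π x ∈ LinearMap.ker π := by
        simp only [LinearMap.mem_ker, map_sub]
        rw [hπid _ h1, sub_self]
      have : x = π x + (x - π x) := by abel
      rw [this]
      exact Submodule.add_mem_sup h1 h2

theorem trace_eq_add_of_isCompl (ρ : Representation ℂ G V) [FiniteDimensional ℂ V]
    (p q : Submodule ℂ V) (hp : IsStable ρ p) (hq : IsStable ρ q) (h : IsCompl p q) (g : G) :
    LinearMap.trace ℂ V (ρ g) =
      LinearMap.trace ℂ p (subRep ρ p hp g) + LinearMap.trace ℂ q (subRep ρ q hq g) := by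
  set e := Submodule.prodEquivOfIsCompl p q h
  set F := LinearMap.prodMap (subRep ρ p hp g) (subRep ρ q hq g)
  have key : ρ g = (e.conj F : (V →ₗ[ℂ] V)) := by
    ext v
    rw [LinearEquiv.conj_apply]
    obtain ⟨z, rfl⟩ := e.surjective v
    simp only [LinearMap.comp_apply, LinearEquiv.coe_coe, LinearEquiv.symm_apply_apply]
    obtain ⟨z1, z2⟩ := z
    rw [Submodule.coe_prodEquivOfIsCompl']
    show ρ g (↑z1 + ↑z2) = ↑(((subRep ρ p hp g) z1, (subRep ρ q hq g) z2).1 : p)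
        + ↑(((subRep ρ p hp g) z1, (subRep ρ q hq g) z2).2 : q)
    simp [map_add]
  rw [key, LinearMap.trace_conj', LinearMap.trace_prodMap']

theorem exists_char_decomp (W : FDRep ℂ G) :
    ∃ l : List (FDRep ℂ G), (∀ S ∈ l, Simple S) ∧
      ∀ g : G, W.character g = (l.map (fun S => S.character g)).sum := by
  generalize hn : finrank ℂ W = n
  induction n using Nat.strong_induction_on generalizing W with
  | _ n ih =>
  subst hn
  by_cases h0 : finrank ℂ W = 0
  · refine ⟨[], by simp, fun g => ?_⟩
    have hss : Subsingleton W := Module.finrank_zero_iff.mp h0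
    have hz : W.ρ g = 0 := Subsingleton.elim _ _
    show LinearMap.trace ℂ W (W.ρ g) = 0
    rw [hz, map_zero]
  · set 𝒮 : Set (Submodule ℂ W) := {r | IsStable W.ρ r ∧ r ≠ ⊥} with h𝒮
    have htop : (⊤ : Submodule ℂ W) ∈ 𝒮 := by
      refine ⟨fun g x _ => Submodule.mem_top, fun hbot => h0 ?_⟩
      rw [← finrank_top ℂ W, hbot, finrank_bot]
    have hne : ((fun r : Submodule ℂ W => finrank ℂ r) '' 𝒮).Nonempty := ⟨_, ⟨⊤, htop, rfl⟩⟩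
    obtain ⟨p, hpS, hpmin⟩ : ∃ p ∈ 𝒮, ∀ r ∈ 𝒮, finrank ℂ p ≤ finrank ℂ r := by
      obtain ⟨p, hp, hval⟩ := Nat.sInf_mem hne
      refine ⟨p, hp, fun r hr => ?_⟩
      have : finrank ℂ ↥p = sInf ((fun r : Submodule ℂ W => finrank ℂ r) '' 𝒮) := hval
      rw [this]
      exact Nat.sInf_le ⟨r, hr, rfl⟩
    have hmin' : ∀ r : Submodule ℂ W, IsStable W.ρ r → r ≠ ⊥ → r ≤ p → r = p := fun r h1 h2 h3 =>
      Submodule.eq_of_le_of_finrank_le h3 (hpmin r ⟨h1, h2⟩)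
    have hS1 : Simple (FDRep.of (subRep W.ρ p hpS.1)) :=
      simple_of_minimal W p hpS.1 hpS.2 hmin'
    obtain ⟨q, hqst, hcompl⟩ := exists_stable_compl W.ρ p hpS.1
    have hadd : finrank ℂ p + finrank ℂ q = finrank ℂ W :=
      Submodule.finrank_add_eq_of_isCompl hcompl
    have hppos : 0 < finrank ℂ p := by
      rcases Nat.eq_zero_or_pos (finrank ℂ p) with h | h
      · exact absurd (Submodule.finrank_eq_zero.mp h) hpS.2
      · exact h
    have hqlt : finrank ℂ (FDRep.of (subRep W.ρ q hqst)) < finrank ℂ W := by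
      show finrank ℂ q < finrank ℂ W
      omega
    obtain ⟨l₂, hl₂s, hl₂c⟩ := ih _ hqlt (FDRep.of (subRep W.ρ q hqst)) rfl
    refine ⟨FDRep.of (subRep W.ρ p hpS.1) :: l₂, ?_, fun g => ?_⟩
    · intro S hS
      rcases List.mem_cons.mp hS with h | h
      · rw [h]; exact hS1
      · exact hl₂s S h
    · rw [List.map_cons, List.sum_cons, ← hl₂c g]
      exact trace_eq_add_of_isCompl W.ρ p q hpS.1 hqst hcompl g

theorem conv_scalar (u : G → ℂ) (hu : ∀ g h : G, u (h * g * h⁻¹) = u g)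
    (S : FDRep ℂ G) [Simple S] :
    ∃ μ : ℂ, (∑ g : G, u g • (S.ρ g : S →ₗ[ℂ] S)) = μ • (LinearMap.id : S →ₗ[ℂ] S)
      ∧ μ * (finrank ℂ S : ℂ) = ∑ g : G, u g * S.character g := by
  set T : S →ₗ[ℂ] S := ∑ g : G, u g • (S.ρ g : S →ₗ[ℂ] S) with hT
  have hρmul : ∀ (a b : G) (x : S), S.ρ (a * b) x = S.ρ a (S.ρ b x) := fun a b x =>
    LinearMap.congr_fun (S.ρ.map_mul a b) x
  have hcomm : ∀ (h : G) (x : S), T (S.ρ h x) = S.ρ h (T x) := by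
    intro h x
    rw [hT]
    simp only [LinearMap.sum_apply, LinearMap.smul_apply, map_sum, map_smul]
    set e : Equiv.Perm G := (Equiv.mulLeft h).trans (Equiv.mulRight h⁻¹) with he
    rw [← Equiv.sum_comp e (fun g => u g • (S.ρ g) ((S.ρ h) x))]
    refine Finset.sum_congr rfl fun g _ => ?_
    have he' : e g = h * g * h⁻¹ := by simp [he, mul_assoc]
    rw [he', hu g h]
    congr 1
    rw [← hρmul (h * g * h⁻¹) h x, ← hρmul h g x]
    congr 1
    group
  set Tm : S ⟶ S := ⟨FGModuleCat.ofHom T, fun h => FGModuleCat.hom_ext (LinearMap.ext fun x => hcomm h x)⟩ with hTm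
  obtain ⟨μ, hμ⟩ := endomorphism_simple_eq_smul_id ℂ Tm
  have hhom : T = μ • (LinearMap.id : S →ₗ[ℂ] S) := by
    have := congrArg (fun φ => φ.hom.hom.hom) hμ
    rw [hTm] at this
    exact this.symm
  refine ⟨μ, hhom, ?_⟩
  have htr := congrArg (LinearMap.trace ℂ S) hhom
  rw [map_smul, LinearMap.trace_id, hT, map_sum] at htr
  simp only [map_smul, smul_eq_mul] at htr
  exact htr.symm

theorem conj_avg_scalar (S : FDRep ℂ G) [Simple S] (a : G) :
    ∃ lam : ℂ, (∑ h : G, (S.ρ (h * a * h⁻¹) : S →ₗ[ℂ] S)) = lam • (LinearMap.id : S →ₗ[ℂ] S)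
      ∧ lam * (finrank ℂ S : ℂ) = (Fintype.card G : ℂ) * S.character a := by
  set T : S →ₗ[ℂ] S := ∑ h : G, (S.ρ (h * a * h⁻¹) : S →ₗ[ℂ] S) with hT
  have hρmul : ∀ (b c : G) (x : S), S.ρ (b * c) x = S.ρ b (S.ρ c x) := fun b c x =>
    LinearMap.congr_fun (S.ρ.map_mul b c) x
  have hcomm : ∀ (g : G) (x : S), T (S.ρ g x) = S.ρ g (T x) := by
    intro g x
    rw [hT]
    simp only [LinearMap.sum_apply, map_sum]
    rw [← Equiv.sum_comp (Equiv.mulLeft g) (fun h => (S.ρ (h * a * h⁻¹)) ((S.ρ g) x))]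
    refine Finset.sum_congr rfl fun h _ => ?_
    simp only [Equiv.coe_mulLeft]
    rw [← hρmul (g * h * a * (g * h)⁻¹) g x, ← hρmul g (h * a * h⁻¹) x]
    congr 1
    group
  set Tm : S ⟶ S := ⟨FGModuleCat.ofHom T, fun h => FGModuleCat.hom_ext (LinearMap.ext fun x => hcomm h x)⟩ with hTm
  obtain ⟨lam, hμ⟩ := endomorphism_simple_eq_smul_id ℂ Tm
  have hhom : T = lam • (LinearMap.id : S →ₗ[ℂ] S) := by
    have := congrArg (fun φ => φ.hom.hom.hom) hμ
    rw [hTm] at this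
    exact this.symm
  refine ⟨lam, hhom, ?_⟩
  have htr := congrArg (LinearMap.trace ℂ S) hhom
  rw [map_smul, LinearMap.trace_id, hT, map_sum] at htr
  have hc : ∀ h : G, LinearMap.trace ℂ S (S.ρ (h * a * h⁻¹)) = S.character a := fun h =>
    FDRep.char_conj S a h
  simp only [hc] at htr
  rw [Finset.sum_const, Finset.card_univ, nsmul_eq_mul, smul_eq_mul] at htr
  exact htr.symm

theorem simple_finrank_pos (S : FDRep ℂ G) [Simple S] : 0 < finrank ℂ S := by
  by_contra hd
  push_neg at hd
  have h0 : finrank ℂ S = 0 := Nat.le_zero.mp hd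
  have hss : Subsingleton S := Module.finrank_zero_iff.mp h0
  apply CategoryTheory.id_nonzero S
  apply Action.hom_ext
  apply FGModuleCat.hom_ext
  apply LinearMap.ext
  intro x
  exact @Subsingleton.elim _ hss _ _

theorem char_pair_orthonormal (S T : FDRep ℂ G) [Simple S] [Simple T] :
    ∑ g : G, S.character g * T.character g⁻¹ =
      if Nonempty (S ≅ T) then (Fintype.card G : ℂ) else 0 := by
  have horth : ⅟ (Fintype.card G : ℂ) • ∑ g : G, S.character g * T.character g⁻¹
      = (if Nonempty (S ≅ T) then 1 else 0 : ℂ) := by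
    rw [invOf_eq_inv, smul_eq_mul, Fintype.card_eq_nat_card, FDRep.char_orthonormal S T]
  have key : ∑ g : G, S.character g * T.character g⁻¹
      = (Fintype.card G : ℂ) * (⅟ (Fintype.card G : ℂ) • ∑ g : G, S.character g * T.character g⁻¹) := by
    rw [smul_eq_mul, ← mul_assoc, mul_invOf_self, one_mul]
  rw [key, horth]
  split_ifs <;> simp

theorem char_self_orthonormal (S : FDRep ℂ G) [Simple S] :
    ∑ g : G, S.character g * S.character g⁻¹ = (Fintype.card G : ℂ) := by
  rw [char_pair_orthonormal S S, if_pos ⟨Iso.refl S⟩]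

theorem sum_commutator_char (S : FDRep ℂ G) [Simple S] :
    (finrank ℂ S : ℂ) * (∑ g : G, ∑ h : G, S.character (g * h * g⁻¹ * h⁻¹)) =
      (Fintype.card G : ℂ) ^ 2 := by
  have key : ∀ h : G, (finrank ℂ S : ℂ) * (∑ g : G, S.character (g * h * g⁻¹ * h⁻¹)) =
      (Fintype.card G : ℂ) * (S.character h * S.character h⁻¹) := by
    intro h
    obtain ⟨lam, heq, htr⟩ := conj_avg_scalar S h
    have h1 : ∀ g : G, S.character (g * h * g⁻¹ * h⁻¹)
        = LinearMap.trace ℂ S ((S.ρ (g * h * g⁻¹) : S →ₗ[ℂ] S) * (S.ρ h⁻¹)) := by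
      intro g
      show LinearMap.trace ℂ S (S.ρ (g * h * g⁻¹ * h⁻¹)) = _
      rw [show (g * h * g⁻¹ * h⁻¹) = (g * h * g⁻¹) * h⁻¹ by group, S.ρ.map_mul]
    have h2 : (∑ g : G, S.character (g * h * g⁻¹ * h⁻¹))
        = LinearMap.trace ℂ S ((∑ g : G, (S.ρ (g * h * g⁻¹) : S →ₗ[ℂ] S)) * (S.ρ h⁻¹)) := by
      rw [Finset.sum_mul, map_sum]
      exact Finset.sum_congr rfl fun g _ => h1 g
    rw [h2, heq, Algebra.smul_mul_assoc, ← Module.End.one_eq_id, one_mul]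
    rw [map_smul, smul_eq_mul]
    show (finrank ℂ S : ℂ) * (lam * S.character h⁻¹) = _
    rw [← mul_assoc, mul_comm (finrank ℂ S : ℂ) lam, htr]
    ring
  calc (finrank ℂ S : ℂ) * (∑ g : G, ∑ h : G, S.character (g * h * g⁻¹ * h⁻¹))
      = ∑ h : G, (finrank ℂ S : ℂ) * (∑ g : G, S.character (g * h * g⁻¹ * h⁻¹)) := by
        rw [Finset.sum_comm (γ := G)]
        rw [Finset.mul_sum]
    _ = ∑ h : G, (Fintype.card G : ℂ) * (S.character h * S.character h⁻¹) := by
        exact Finset.sum_congr rfl fun h _ => key h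
    _ = (Fintype.card G : ℂ) * ∑ h : G, S.character h * S.character h⁻¹ := by
        rw [Finset.mul_sum]
    _ = (Fintype.card G : ℂ) ^ 2 := by rw [char_self_orthonormal]; ring

theorem sum_triple_char (S : FDRep ℂ G) [Simple S] (u : G → ℂ)
    (hu : ∀ g h : G, u (h * g * h⁻¹) = u g) :
    (finrank ℂ S : ℂ) * (∑ g : G, ∑ h : G, u g * u h * S.character (g * h)) =
      (∑ g : G, u g * S.character g) ^ 2 := by
  obtain ⟨μ, heq, htr⟩ := conv_scalar u hu S
  have key : ∀ g : G, (∑ h : G, u g * u h * S.character (g * h)) = u g * (μ * S.character g) := by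
    intro g
    have h1 : ∀ h : G, u g * u h * S.character (g * h)
        = u g * LinearMap.trace ℂ S ((S.ρ g : S →ₗ[ℂ] S) * (u h • (S.ρ h : S →ₗ[ℂ] S))) := by
      intro h
      have hgh : LinearMap.trace ℂ S ((S.ρ g : S →ₗ[ℂ] S) * (S.ρ h)) = S.character (g * h) := by
        rw [← S.ρ.map_mul]; rfl
      rw [mul_smul_comm, map_smul, hgh, smul_eq_mul]
      ring
    rw [Finset.sum_congr rfl fun h _ => h1 h, ← Finset.mul_sum, ← map_sum, ← Finset.mul_sum, heq]
    rw [mul_smul_comm, map_smul, smul_eq_mul, ← Module.End.one_eq_id, mul_one]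
    rfl
  rw [Finset.sum_congr rfl fun g _ => key g]
  have : (∑ g : G, u g * (μ * S.character g)) = μ * ∑ g : G, u g * S.character g := by
    rw [Finset.mul_sum]; exact Finset.sum_congr rfl fun g _ => by ring
  rw [this, ← htr]
  ring

theorem list_map_sum (l : List (FDRep ℂ G)) (f : FDRep ℂ G → ℂ) :
    (l.map f).sum = ∑ i : Fin l.length, f (l.get i) := by
  induction l with
  | nil => simp
  | cons a t ih =>
    rw [List.map_cons, List.sum_cons, ih]
    show _ = ∑ i : Fin (t.length + 1), f ((a :: t).get i)
    rw [Fin.sum_univ_succ]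
    rfl

end Main

end GelfandAux

open CategoryTheory Module FDRep Representation
open scoped Classical

/-- **A criterion for Gelfand pairs** (Corollary 4.2). For `X = G/H`, the pair `(G,H)` is a
Gelfand pair (i.e. every irreducible representation appears in `ℂ[X]` with multiplicity at
most one) iff `Σ_{g,h} #X^{[g,h]} = Σ_{g,h} #X^g · #X^h · #X^{gh}`. -/
theorem stmt_4 {G : Type} [Group G] [Fintype G] (H : Subgroup G) [Fintype (G ⧸ H)] :
    (∀ ρ : FDRep ℂ G, Simple ρ → finrank ℂ (ρ ⟶ permFDRep G (G ⧸ H)) ≤ 1) ↔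
    (∑ g : G, ∑ h : G, Nat.card {x : G ⧸ H // ⁅g, h⁆ • x = x}) =
      ∑ g : G, ∑ h : G,
        Nat.card {x : G ⧸ H // g • x = x} * Nat.card {x : G ⧸ H // h • x = x} *
          Nat.card {x : G ⧸ H // (g * h) • x = x} := by
  classical
  set W := permFDRep G (G ⧸ H) with hW
  have hn0 : (Fintype.card G : ℂ) ≠ 0 := by exact_mod_cast Fintype.card_ne_zero
  have hcfix : ∀ g : G, W.character g = (Nat.card {x : G ⧸ H // g • x = x} : ℂ) :=
    fun g => GelfandAux.char_perm (G ⧸ H) g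
  have hcinv : ∀ g : G, W.character g⁻¹ = W.character g := by
    intro g
    rw [hcfix, hcfix]
    congr 1
    refine Nat.card_congr (Equiv.subtypeEquivRight fun x => ?_)
    rw [inv_smul_eq_iff, eq_comm]
  obtain ⟨l, hlsimp, hldec⟩ := GelfandAux.exists_char_decomp W
  set k := l.length with hk
  set S : Fin k → FDRep ℂ G := fun i => l.get i with hS
  have hsimp : ∀ i, Simple (S i) := fun i => hlsimp _ (l.get_mem i)
  have hdec : ∀ g : G, W.character g = ∑ i, (S i).character g := fun g =>
    (hldec g).trans (GelfandAux.list_map_sum l _)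
  set d : Fin k → ℕ := fun i => finrank ℂ (S i) with hd
  have hdpos : ∀ i, 0 < d i := fun i => @GelfandAux.simple_finrank_pos G _ _ (S i) (hsimp i)
  have hdne : ∀ i, (d i : ℂ) ≠ 0 := fun i => Nat.cast_ne_zero.mpr (hdpos i).ne'
  set m : Fin k → ℕ := fun i => (Finset.univ.filter (fun j => Nonempty (S i ≅ S j))).card with hm
  have hm1 : ∀ i, 1 ≤ m i := fun i => Finset.card_pos.mpr
    ⟨i, Finset.mem_filter.mpr ⟨Finset.mem_univ i, ⟨Iso.refl _⟩⟩⟩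
  have key2 : ∀ i, ∑ g : G, W.character g * (S i).character g
      = (Fintype.card G : ℂ) * (m i : ℂ) := by
    intro i
    haveI := hsimp i
    have step1 : ∀ g : G, W.character g * (S i).character g
        = ∑ j, (S i).character g * (S j).character g⁻¹ := by
      intro g
      rw [← hcinv g, hdec g⁻¹, Finset.sum_mul]
      exact Finset.sum_congr rfl fun j _ => mul_comm _ _
    rw [Finset.sum_congr rfl fun g _ => step1 g, Finset.sum_comm]
    have step2 : ∀ j, ∑ g : G, (S i).character g * (S j).character g⁻¹
        = if Nonempty (S i ≅ S j) then (Fintype.card G : ℂ) else 0 := by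
      intro j
      haveI := hsimp j
      exact GelfandAux.char_pair_orthonormal (S i) (S j)
    rw [Finset.sum_congr rfl fun j _ => step2 j, Finset.sum_ite, Finset.sum_const,
      Finset.sum_const_zero, add_zero, nsmul_eq_mul]
    simp only [hm]
    ring
  have key1 : ∀ i, ∑ g : G, ∑ h : G, (S i).character ⁅g, h⁆
      = (Fintype.card G : ℂ) ^ 2 / (d i : ℂ) := by
    intro i
    haveI := hsimp i
    rw [eq_div_iff (hdne i)]
    have h0 := GelfandAux.sum_commutator_char (S i)
    rw [mul_comm] at h0
    exact h0
  have key3 : ∀ i, ∑ g : G, ∑ h : G, W.character g * W.character h * (S i).character (g * h)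
      = ((Fintype.card G : ℂ) * (m i : ℂ)) ^ 2 / (d i : ℂ) := by
    intro i
    haveI := hsimp i
    have h1 := GelfandAux.sum_triple_char (S i) W.character (fun a b => FDRep.char_conj W a b)
    rw [key2 i] at h1
    rw [eq_div_iff (hdne i), mul_comm] at *
    rw [mul_comm]
    exact h1
  have totL : (∑ g : G, ∑ h : G, W.character ⁅g, h⁆)
      = ∑ i, (Fintype.card G : ℂ) ^ 2 / (d i : ℂ) := by
    calc (∑ g : G, ∑ h : G, W.character ⁅g, h⁆)
        = ∑ g : G, ∑ h : G, ∑ i, (S i).character ⁅g, h⁆ :=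
          Finset.sum_congr rfl fun g _ => Finset.sum_congr rfl fun h _ => hdec _
      _ = ∑ g : G, ∑ i, ∑ h : G, (S i).character ⁅g, h⁆ :=
          Finset.sum_congr rfl fun g _ => Finset.sum_comm
      _ = ∑ i, ∑ g : G, ∑ h : G, (S i).character ⁅g, h⁆ := Finset.sum_comm
      _ = ∑ i, (Fintype.card G : ℂ) ^ 2 / (d i : ℂ) :=
          Finset.sum_congr rfl fun i _ => key1 i
  have totR : (∑ g : G, ∑ h : G, W.character g * W.character h * W.character (g * h))
      = ∑ i, ((Fintype.card G : ℂ) * (m i : ℂ)) ^ 2 / (d i : ℂ) := by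
    calc (∑ g : G, ∑ h : G, W.character g * W.character h * W.character (g * h))
        = ∑ g : G, ∑ h : G, ∑ i, W.character g * W.character h * (S i).character (g * h) := by
          refine Finset.sum_congr rfl fun g _ => Finset.sum_congr rfl fun h _ => ?_
          rw [hdec (g * h), Finset.mul_sum]
      _ = ∑ g : G, ∑ i, ∑ h : G, W.character g * W.character h * (S i).character (g * h) :=
          Finset.sum_congr rfl fun g _ => Finset.sum_comm
      _ = ∑ i, ∑ g : G, ∑ h : G, W.character g * W.character h * (S i).character (g * h) :=
          Finset.sum_comm
      _ = ∑ i, ((Fintype.card G : ℂ) * (m i : ℂ)) ^ 2 / (d i : ℂ) :=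
          Finset.sum_congr rfl fun i _ => key3 i
  have mult : ∀ (ρ0 : FDRep ℂ G), Simple ρ0 → finrank ℂ (ρ0 ⟶ W)
      = (Finset.univ.filter (fun j => Nonempty (S j ≅ ρ0))).card := by
    intro ρ0 hρ0
    haveI := hρ0
    have hC : (finrank ℂ (ρ0 ⟶ W) : ℂ)
        = ((Finset.univ.filter (fun j => Nonempty (S j ≅ ρ0))).card : ℂ) := by
      rw [GelfandAux.proj_formula ρ0 W]
      have step1 : ∀ g : G, ρ0.character g⁻¹ * W.character g
          = ∑ j, (S j).character g * ρ0.character g⁻¹ := by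
        intro g
        rw [hdec g, Finset.mul_sum]
        exact Finset.sum_congr rfl fun j _ => mul_comm _ _
      rw [Finset.sum_congr rfl fun g _ => step1 g, Finset.sum_comm]
      have step2 : ∀ j, ∑ g : G, (S j).character g * ρ0.character g⁻¹
          = if Nonempty (S j ≅ ρ0) then (Fintype.card G : ℂ) else 0 := by
        intro j
        haveI := hsimp j
        exact GelfandAux.char_pair_orthonormal (S j) ρ0
      rw [Finset.sum_congr rfl fun j _ => step2 j, Finset.sum_ite, Finset.sum_const,
        Finset.sum_const_zero, add_zero, nsmul_eq_mul, smul_eq_mul]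
      rw [mul_comm ((Finset.univ.filter (fun j => Nonempty (S j ≅ ρ0))).card : ℂ)
        (Fintype.card G : ℂ), ← mul_assoc, invOf_mul_self, one_mul]
    exact_mod_cast hC
  have hm_eq : ∀ i, m i = finrank ℂ (S i ⟶ W) := by
    intro i
    rw [mult (S i) (hsimp i)]
    simp only [hm]
    congr 1
    ext j
    simp only [Finset.mem_filter, Finset.mem_univ, true_and]
    exact ⟨fun ⟨e⟩ => ⟨e.symm⟩, fun ⟨e⟩ => ⟨e.symm⟩⟩
  have main_iff : ((∑ i, (Fintype.card G : ℂ) ^ 2 / (d i : ℂ))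
      = ∑ i, ((Fintype.card G : ℂ) * (m i : ℂ)) ^ 2 / (d i : ℂ)) ↔ (∀ i, m i = 1) := by
    constructor
    · intro hEq
      have e1 : (∑ i, (Fintype.card G : ℂ) ^ 2 / (d i : ℂ))
          = (Fintype.card G : ℂ) ^ 2 * ∑ i, (1 : ℂ) / (d i : ℂ) := by
        rw [Finset.mul_sum]; exact Finset.sum_congr rfl fun i _ => by ring
      have e2 : (∑ i, ((Fintype.card G : ℂ) * (m i : ℂ)) ^ 2 / (d i : ℂ))
          = (Fintype.card G : ℂ) ^ 2 * ∑ i, (m i : ℂ) ^ 2 / (d i : ℂ) := by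
        rw [Finset.mul_sum]; exact Finset.sum_congr rfl fun i _ => by ring
      have hcancel : (∑ i, (1 : ℂ) / (d i : ℂ)) = ∑ i, (m i : ℂ) ^ 2 / (d i : ℂ) := by
        apply mul_left_cancel₀ (pow_ne_zero 2 hn0)
        rw [← e1, ← e2, hEq]
      have hr : (∑ i, (1 : ℝ) / (d i : ℝ)) = ∑ i, (m i : ℝ) ^ 2 / (d i : ℝ) := by
        apply Complex.ofReal_inj.mp
        push_cast
        exact hcancel
      intro i
      have hzero : ∑ j, ((m j : ℝ) ^ 2 - 1) / (d j : ℝ) = 0 := by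
        have hsplit : ∀ j : Fin k, ((m j : ℝ) ^ 2 - 1) / (d j : ℝ)
            = (m j : ℝ) ^ 2 / (d j : ℝ) - 1 / (d j : ℝ) := fun j => by ring
        rw [Finset.sum_congr rfl fun j _ => hsplit j, Finset.sum_sub_distrib, ← hr, sub_self]
      have hnonneg : ∀ j ∈ (Finset.univ : Finset (Fin k)),
          (0 : ℝ) ≤ ((m j : ℝ) ^ 2 - 1) / (d j : ℝ) := by
        intro j _
        apply div_nonneg
        · have h1 : (1 : ℝ) ≤ (m j : ℝ) := by exact_mod_cast hm1 j
          nlinarith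
        · positivity
      have hterm := (Finset.sum_eq_zero_iff_of_nonneg hnonneg).mp hzero i (Finset.mem_univ i)
      have hd' : ((d i : ℝ)) ≠ 0 := by exact_mod_cast (hdpos i).ne'
      have hnum : (m i : ℝ) ^ 2 - 1 = 0 := by
        rcases div_eq_zero_iff.mp hterm with h | h
        · exact h
        · exact absurd h hd'
      have h1 : (1 : ℝ) ≤ (m i : ℝ) := by exact_mod_cast hm1 i
      have hmr : (m i : ℝ) = 1 := by nlinarith
      exact_mod_cast hmr
    · intro hall
      refine Finset.sum_congr rfl fun i _ => ?_
      rw [hall i]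
      norm_num
  have cast_iff : ((∑ g : G, ∑ h : G, Nat.card {x : G ⧸ H // ⁅g, h⁆ • x = x}) =
      ∑ g : G, ∑ h : G,
        Nat.card {x : G ⧸ H // g • x = x} * Nat.card {x : G ⧸ H // h • x = x} *
          Nat.card {x : G ⧸ H // (g * h) • x = x}) ↔
      ((∑ g : G, ∑ h : G, W.character ⁅g, h⁆) =
        ∑ g : G, ∑ h : G, W.character g * W.character h * W.character (g * h)) := by
    have eL : ((∑ g : G, ∑ h : G, Nat.card {x : G ⧸ H // ⁅g, h⁆ • x = x} : ℕ) : ℂ)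
        = ∑ g : G, ∑ h : G, W.character ⁅g, h⁆ := by
      push_cast
      exact Finset.sum_congr rfl fun g _ => Finset.sum_congr rfl fun h _ => (hcfix _).symm
    have eR : ((∑ g : G, ∑ h : G,
        Nat.card {x : G ⧸ H // g • x = x} * Nat.card {x : G ⧸ H // h • x = x} *
          Nat.card {x : G ⧸ H // (g * h) • x = x} : ℕ) : ℂ)
        = ∑ g : G, ∑ h : G, W.character g * W.character h * W.character (g * h) := by
      push_cast
      refine Finset.sum_congr rfl fun g _ => Finset.sum_congr rfl fun h _ => ?_
      rw [hcfix g, hcfix h, hcfix (g * h)]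
    rw [← Nat.cast_inj (R := ℂ), eL, eR]
  rw [cast_iff, totL, totR, main_iff]
  constructor
  · intro hyp i
    have h1 := mult (S i) (hsimp i)
    have h2 := hyp (S i) (hsimp i)
    have h3 := hm_eq i
    have h4 := hm1 i
    omega
  · intro hall ρ0 hρ0
    rw [mult ρ0 hρ0]
    by_cases hem : (Finset.univ.filter (fun j => Nonempty (S j ≅ ρ0))).Nonempty
    · obtain ⟨j0, hj0⟩ := hem
      obtain ⟨e0⟩ : Nonempty (S j0 ≅ ρ0) := (Finset.mem_filter.mp hj0).2
      have hfe : (Finset.univ.filter (fun j => Nonempty (S j ≅ ρ0)))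
          = (Finset.univ.filter (fun j => Nonempty (S j0 ≅ S j))) := by
        ext j
        simp only [Finset.mem_filter, Finset.mem_univ, true_and]
        exact ⟨fun ⟨f⟩ => ⟨e0.trans f.symm⟩, fun ⟨f⟩ => ⟨f.symm.trans e0⟩⟩
      rw [hfe]
      exact le_of_eq (hall j0)
    · rw [Finset.not_nonempty_iff_eq_empty.mp hem]
      simp
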